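/- Let D be a finite set and R a binary relation on D with m = |R| (the number of pairs in R). Define R^{≤n} = ⋃_{i=1}^{n} R^i and R^{=n} = R^n ∖ R^{≤n−1} (with R^{≤0} = ∅), and define the 6-ary relation Run = ⋃_{i=1}^{m} R^{≤i} × R^{≤i+1} × R^{=i+1}, a set of triples of pairs over D. For a set X of triples of pairs over D and a pair (x,y), write X̃(x,y) = {(p,q) : (p,q,(x,y)) ∈ X}, Ĥ(x,y) = {p : ∃q, (p,q) ∈ X̃(x,y)}, Č(x,y) = {q : ∃p, (p,q) ∈ X̃(x,y)}, and π(X) = {(x,y) : X̃(x,y) ≠ ∅}. Then X = Run if and only if all of the following hold: (1) for every (x,y) ∈ π(X): (a) X̃(x,y) = Ĥ(x,y) × Č(x,y); (b) R ⊆ Ĥ(x,y); (c) Č(x,y) = Ĥ(x,y) ∪ Ĥ(x,y) ∘ R; (d) (x,y) ∈ Č(x,y) ∖ Ĥ(x,y); (e) every pair (x',y') ∈ Č(x,y) ∖ Ĥ(x,y) belongs to π(X) and satisfies Ĥ(x',y') = Ĥ(x,y); (2) R^{=2} ⊆ π(X), and for every (x,y) ∈ R^{=2}, Ĥ(x,y)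 = R; (3) for every (x,y) ∈ π(X) with (Č(x,y) ∘ R) ∖ Č(x,y) ≠ ∅, there exists (x',y') ∈ π(X) with Ĥ(x',y') = Č(x,y); (4) for every (x,y) ∈ π(X) with Ĥ(x,y) ≠ R, there exists (x',y') ∈ π(X) with Č(x',y') = Ĥ(x,y). -/

import Mathlib

/-- Composition of binary relations given as sets of pairs:
S ∘ T = {(x,z) : ∃ y, (x,y) ∈ S ∧ (y,z) ∈ T}. -/
def relComp {α : Type*} (S T : Set (α × α)) : Set (α × α) :=
  {p | ∃ y, (p.1, y) ∈ S ∧ (y, p.2) ∈ T}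

/-- Composition powers of a set of pairs: R^1 = R and R^{n+1} = R^n ∘ R
(R^0 is set to ∅ and is only used through `relLe R 0 = ∅`). -/
def relPow {α : Type*} (R : Set (α × α)) : ℕ → Set (α × α)
  | 0 => ∅
  | 1 => R
  | n + 2 => relComp (relPow R (n + 1)) R

/-- R^{≤n} = ⋃_{i=1}^{n} R^i (so R^{≤0} = ∅). -/
def relLe {α : Type*} (R : Set (α × α)) (n : ℕ) : Set (α × α) :=
  ⋃ i ∈ Finset.Icc 1 n, relPow R i

/-- R^{=n} = R^n ∖ R^{≤n−1}. -/
def relEq {α : Type*} (R : Set (α × α)) (n : ℕ) : Set (α × α) :=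
  relPow R n \ relLe R (n - 1)

/-- Run = ⋃_{i=1}^{m} R^{≤i} × R^{≤i+1} × R^{=i+1}, a set of triples of pairs. -/
def run {α : Type*} (R : Set (α × α)) (m : ℕ) : Set ((α × α) × (α × α) × (α × α)) :=
  ⋃ i ∈ Finset.Icc 1 m, relLe R i ×ˢ (relLe R (i + 1) ×ˢ relEq R (i + 1))

/-- X̃(z) = {(p,q) : (p,q,z) ∈ X}. -/
def tilde {α : Type*} (X : Set ((α × α) × (α × α) × (α × α))) (z : α × α) :
    Set ((α × α) × (α × α)) :=
  {pq | (pq.1, pq.2, z) ∈ X}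

/-- Ĥ(z) = {p : ∃ q, (p,q) ∈ X̃(z)}. -/
def hat {α : Type*} (X : Set ((α × α) × (α × α) × (α × α))) (z : α × α) :
    Set (α × α) :=
  {p | ∃ q, (p, q) ∈ tilde X z}

/-- Č(z) = {q : ∃ p, (p,q) ∈ X̃(z)}. -/
def check {α : Type*} (X : Set ((α × α) × (α × α) × (α × α))) (z : α × α) :
    Set (α × α) :=
  {q | ∃ p, (p, q) ∈ tilde X z}

/-- π(X) = {z : X̃(z) ≠ ∅}. -/
def proj56 {α : Type*} (X : Set ((α × α) × (α × α) × (α × α))) : Set (α × α) :=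
  {z | tilde X z ≠ ∅}


namespace Aux
variable {α : Type*} (R : Set (α × α))

lemma relPow_succ : ∀ n, 1 ≤ n → relPow R (n+1) = relComp (relPow R n) R
  | (_+1), _ => rfl

lemma mem_relLe {n : ℕ} {z : α × α} :
    z ∈ relLe R n ↔ ∃ i, (1 ≤ i ∧ i ≤ n) ∧ z ∈ relPow R i := by
  simp [relLe, Finset.mem_Icc, and_assoc]

lemma relLe_zero : relLe R 0 = ∅ := by
  ext z; simp [mem_relLe]

lemma relLe_one : relLe R 1 = R := by
  ext z
  simp only [mem_relLe]
  constructor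
  · rintro ⟨i, ⟨h1, h2⟩, hz⟩
    obtain rfl : i = 1 := le_antisymm h2 h1
    exact hz
  · exact fun h => ⟨1, ⟨le_refl _, le_refl _⟩, h⟩

lemma relPow_subset_relLe {i n : ℕ} (h1 : 1 ≤ i) (h2 : i ≤ n) :
    relPow R i ⊆ relLe R n := fun z hz => (mem_relLe R).2 ⟨i, ⟨h1, h2⟩, hz⟩

lemma relLe_mono {n n' : ℕ} (h : n ≤ n') : relLe R n ⊆ relLe R n' := by
  intro z hz
  obtain ⟨i, ⟨h1, h2⟩, hz⟩ := (mem_relLe R).1 hz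
  exact (mem_relLe R).2 ⟨i, ⟨h1, h2.trans h⟩, hz⟩

lemma relLe_succ (n : ℕ) : relLe R (n+1) = relLe R n ∪ relPow R (n+1) := by
  ext z
  simp only [mem_relLe, Set.mem_union]
  constructor
  · rintro ⟨i, ⟨h1, h2⟩, hz⟩
    rcases Nat.lt_or_ge i (n+1) with h | h
    · exact Or.inl ⟨i, ⟨h1, by omega⟩, hz⟩
    · obtain rfl : i = n + 1 := by omega
      exact Or.inr hz
  · rintro (⟨i, ⟨h1, h2⟩, hz⟩ | hz)
    · exact ⟨i, ⟨h1, by omega⟩, hz⟩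
    · exact ⟨n+1, ⟨by omega, le_refl _⟩, hz⟩

lemma relComp_mono {S S' T : Set (α × α)} (h : S ⊆ S') : relComp S T ⊆ relComp S' T := by
  rintro z ⟨y, hy1, hy2⟩; exact ⟨y, h hy1, hy2⟩

lemma relComp_relLe_subset (n : ℕ) : relComp (relLe R n) R ⊆ relLe R (n+1) := by
  rintro z ⟨y, hy1, hy2⟩
  obtain ⟨i, ⟨h1, h2⟩, hz⟩ := (mem_relLe R).1 hy1
  refine (mem_relLe R).2 ⟨i+1, ⟨by omega, by omega⟩, ?_⟩
  rw [relPow_succ R i h1]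
  exact ⟨y, hz, hy2⟩

lemma relLe_succ_eq {n : ℕ} (hn : 1 ≤ n) :
    relLe R (n+1) = relLe R n ∪ relComp (relLe R n) R := by
  apply Set.Subset.antisymm
  · rw [relLe_succ]
    apply Set.union_subset_union_right
    rw [relPow_succ R n hn]
    exact relComp_mono (relPow_subset_relLe R hn (le_refl _))
  · exact Set.union_subset (relLe_mono R (by omega)) (relComp_relLe_subset R n)

lemma relEq_succ (n : ℕ) : relEq R (n+1) = relLe R (n+1) \ relLe R n := by
  unfold relEq
  rw [relLe_succ]
  simp only [Nat.add_sub_cancel]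
  ext z
  simp only [Set.mem_diff, Set.mem_union]
  tauto

lemma relEq_unique {n n' : ℕ} {z : α × α} (h : z ∈ relEq R n) (h' : z ∈ relEq R n') :
    n = n' := by
  by_contra hne
  wlog hlt : n < n' generalizing n n'
  · exact this h' h (Ne.symm hne) (by omega)
  have hn1 : 1 ≤ n := by
    rcases Nat.eq_zero_or_pos n with rfl | h1
    · exact absurd h.1 (by simp [relPow])
    · exact h1
  exact h'.2 (relPow_subset_relLe R hn1 (by omega) h.1)

lemma relEq_one : relEq R 1 = R := by
  unfold relEq
  simp [relLe_zero, relPow]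

end Aux

namespace Aux
variable {α : Type*} (R : Set (α × α))

lemma relPow_iff_chain : ∀ n, 1 ≤ n → ∀ a b : α,
    ((a, b) ∈ relPow R n ↔
      ∃ f : ℕ → α, f 0 = a ∧ f n = b ∧ ∀ i < n, (f i, f (i+1)) ∈ R) := by
  intro n
  induction n with
  | zero => omega
  | succ k ih =>
    intro _ a b
    rcases Nat.eq_zero_or_pos k with rfl | hk
    · constructor
      · intro h
        refine ⟨fun i => if i = 0 then a else b, by simp, by simp, ?_⟩
        intro i hi
        obtain rfl : i = 0 := by omega
        simpa [relPow] using h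
      · rintro ⟨f, hf0, hf1, hR⟩
        have := hR 0 (by omega)
        rw [hf0, hf1] at this
        exact this
    · rw [relPow_succ R k hk]
      constructor
      · rintro ⟨y, hy1, hy2⟩
        obtain ⟨f, hf0, hfk, hR⟩ := (ih hk a y).1 hy1
        refine ⟨fun i => if i ≤ k then f i else b, by simp [hf0], by simp, ?_⟩
        intro i hi
        show (if i ≤ k then f i else b, if i + 1 ≤ k then f (i+1) else b) ∈ R
        rcases Nat.lt_or_ge i k with h | h
        · simp only [if_pos (by omega : i ≤ k), if_pos (by omega : i + 1 ≤ k)]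
          exact hR i h
        · have h2 : i = k := by omega
          rw [if_pos (by omega : i ≤ k), if_neg (by omega : ¬ i + 1 ≤ k), h2, hfk]
          exact hy2
      · rintro ⟨f, hf0, hfk1, hR⟩
        refine ⟨f k, (ih hk a (f k)).2 ⟨f, hf0, rfl, fun i hi => hR i (by omega)⟩, ?_⟩
        have := hR k (by omega)
        rwa [hfk1] at this

lemma relEq_le_ncard [Fintype α] {n : ℕ} {z : α × α} (hz : z ∈ relEq R n) :
    n ≤ R.ncard := by
  have hn1 : 1 ≤ n := by
    rcases Nat.eq_zero_or_pos n with rfl | h1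
    · exact absurd hz.1 (by simp [relPow])
    · exact h1
  by_contra hlt
  push_neg at hlt
  obtain ⟨a, b⟩ := z
  obtain ⟨f, hf0, hfn, hR⟩ := (relPow_iff_chain R n hn1 a b).1 hz.1
  -- pigeonhole: the n edges can't all be distinct
  have hfin : R.Finite := Set.toFinite R
  have hmap : ∀ i ∈ Finset.range n, (f i, f (i+1)) ∈ hfin.toFinset := by
    intro i hi
    rw [Set.Finite.mem_toFinset]
    exact hR i (Finset.mem_range.1 hi)
  have hcard : hfin.toFinset.card < (Finset.range n).card := by
    rw [Finset.card_range, ← Set.ncard_eq_toFinset_card R hfin]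
    exact hlt
  obtain ⟨i, hi, j, hj, hij, heq⟩ :=
    Finset.exists_ne_map_eq_of_card_lt_of_maps_to hcard hmap
  rw [Finset.mem_range] at hi hj
  wlog hlt2 : i < j generalizing i j
  · exact this j hj i hi (Ne.symm hij) heq.symm (by omega)
  have hfi : f i = f j := congrArg Prod.fst heq
  have hfi1 : f (i+1) = f (j+1) := congrArg Prod.snd heq
  set d := j - i with hd
  have hd1 : 1 ≤ d := by omega
  have hdn : i + d = j := by omega
  -- splice
  set g : ℕ → α := fun k => if k ≤ i then f k else f (k + d) with hg
  have hchain : ∀ k < n - d, (g k, g (k+1)) ∈ R := by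
    intro k hk
    rcases Nat.lt_trichotomy k i with h | h | h
    · simp only [hg, if_pos (by omega : k ≤ i), if_pos (by omega : k + 1 ≤ i)]
      exact hR k (by omega)
    · subst h
      simp only [hg, if_pos (le_refl k), if_neg (by omega : ¬ k + 1 ≤ k)]
      have : k + 1 + d = j + 1 := by omega
      rw [this, hfi]
      exact hR j hj
    · simp only [hg, if_neg (by omega : ¬ k ≤ i), if_neg (by omega : ¬ k + 1 ≤ i)]
      have : k + 1 + d = k + d + 1 := by omega
      rw [this]
      exact hR (k + d) (by omega)
  have hmem : (a, b) ∈ relPow R (n - d) := by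
    refine (relPow_iff_chain R (n - d) (by omega) a b).2 ⟨g, ?_, ?_, hchain⟩
    · simp [hg, hf0]
    · simp only [hg, if_neg (by omega : ¬ n - d ≤ i)]
      have : n - d + d = n := by omega
      rw [this, hfn]
  exact hz.2 (relPow_subset_relLe R (by omega) (by omega) hmem)

lemma relEq_nonempty_of_le {n k : ℕ} (hne : (relEq R n).Nonempty)
    (hk1 : 1 ≤ k) (hkn : k ≤ n) : (relEq R k).Nonempty := by
  rw [Set.nonempty_iff_ne_empty]
  intro hempty
  have hsub : relPow R k ⊆ relLe R (k - 1) := by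
    intro z hz
    by_contra h
    exact (Set.eq_empty_iff_forall_notMem.1 hempty z) ⟨hz, h⟩
  have hall : ∀ j, k ≤ j → relPow R j ⊆ relLe R (k - 1) := by
    intro j
    induction j with
    | zero => intro h; exact absurd hk1 (by omega)
    | succ jj ihj =>
      intro hj
      rcases Nat.lt_or_ge jj k with h | h
      · obtain rfl : jj + 1 = k := by omega
        exact hsub
      · rw [relPow_succ R jj (by omega)]
        calc relComp (relPow R jj) R ⊆ relComp (relLe R (k-1)) R :=
              relComp_mono (ihj h)
          _ ⊆ relLe R k := by
              have := relComp_relLe_subset R (k - 1)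
              rwa [Nat.sub_add_cancel hk1] at this
          _ ⊆ relLe R (k-1) := by
              have : relLe R k = relLe R (k-1) ∪ relPow R k := by
                have := relLe_succ R (k-1)
                rwa [Nat.sub_add_cancel hk1] at this
              rw [this]
              exact Set.union_subset (le_refl _) hsub
  obtain ⟨z, hz⟩ := hne
  exact hz.2 (relLe_mono R (by omega) (hall n hkn hz.1))

end Aux

namespace Aux
variable {α : Type*} (R : Set (α × α))

lemma mem_run {m : ℕ} {p q z : α × α} :
    (p, q, z) ∈ run R m ↔
      ∃ i, (1 ≤ i ∧ i ≤ m) ∧ p ∈ relLe R i ∧ q ∈ relLe R (i+1) ∧ z ∈ relEq R (i+1) := by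
  constructor
  · intro h
    simp only [run, Set.mem_iUnion, Finset.mem_Icc, Set.mem_prod, exists_prop] at h
    tauto
  · intro h
    simp only [run, Set.mem_iUnion, Finset.mem_Icc, Set.mem_prod, exists_prop]
    tauto

lemma tilde_run_eq {m i : ℕ} {z : α × α} (h1 : 1 ≤ i) (h2 : i ≤ m)
    (hz : z ∈ relEq R (i+1)) :
    tilde (run R m) z = relLe R i ×ˢ relLe R (i+1) := by
  ext ⟨p, q⟩
  simp only [tilde, Set.mem_setOf_eq, mem_run, Set.mem_prod]
  constructor
  · rintro ⟨j, ⟨hj1, hj2⟩, hp, hq, hzj⟩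
    obtain rfl : j = i := by
      have := relEq_unique R hzj hz; omega
    exact ⟨hp, hq⟩
  · rintro ⟨hp, hq⟩
    exact ⟨i, ⟨h1, h2⟩, hp, hq, hz⟩

lemma tilde_run_empty {m : ℕ} {z : α × α}
    (h : ∀ i, 1 ≤ i → i ≤ m → z ∉ relEq R (i+1)) :
    tilde (run R m) z = ∅ := by
  ext ⟨p, q⟩
  simp only [tilde, Set.mem_setOf_eq, mem_run, Set.mem_empty_iff_false, iff_false]
  rintro ⟨i, ⟨h1, h2⟩, _, _, hz⟩
  exact h i h1 h2 hz

lemma hat_of_prod {X : Set ((α × α) × (α × α) × (α × α))} {z : α × α}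
    {A B : Set (α × α)} (h : tilde X z = A ×ˢ B) (hB : B.Nonempty) :
    hat X z = A := by
  ext p
  simp only [hat, Set.mem_setOf_eq, h, Set.mem_prod]
  exact ⟨fun ⟨q, hq⟩ => hq.1, fun hp => ⟨hB.choose, hp, hB.choose_spec⟩⟩

lemma check_of_prod {X : Set ((α × α) × (α × α) × (α × α))} {z : α × α}
    {A B : Set (α × α)} (h : tilde X z = A ×ˢ B) (hA : A.Nonempty) :
    check X z = B := by
  ext q
  simp only [check, Set.mem_setOf_eq, h, Set.mem_prod]
  exact ⟨fun ⟨p, hp⟩ => hp.2, fun hq => ⟨hA.choose, hA.choose_spec, hq⟩⟩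

lemma R_nonempty_of_relEq {i : ℕ} (h1 : 1 ≤ i) (h : (relEq R i).Nonempty) :
    R.Nonempty := by
  have := relEq_nonempty_of_le R h (le_refl 1) h1
  rwa [relEq_one] at this

lemma relLe_nonempty {i : ℕ} (h1 : 1 ≤ i) (hR : R.Nonempty) :
    (relLe R i).Nonempty := by
  obtain ⟨z, hz⟩ := hR
  exact ⟨z, relPow_subset_relLe R (le_refl 1) h1 (by rwa [show relPow R 1 = R from rfl])⟩

end Aux

/-- Let D be a finite set and R a binary relation on D with m = |R|.
Then X = Run if and only if conditions (1)(a)-(e), (2), (3), (4) hold. -/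
theorem stmt_12 (D : Type) [Fintype D] (R : Set (D × D)) (m : ℕ)
    (hm : m = R.ncard)
    (X : Set ((D × D) × (D × D) × (D × D))) :
    X = run R m ↔
      ((∀ z ∈ proj56 X,
          tilde X z = hat X z ×ˢ check X z ∧
          R ⊆ hat X z ∧
          check X z = hat X z ∪ relComp (hat X z) R ∧
          z ∈ check X z \ hat X z ∧
          (∀ z' ∈ check X z \ hat X z, z' ∈ proj56 X ∧ hat X z' = hat X z)) ∧
        (relEq R 2 ⊆ proj56 X ∧ ∀ z ∈ relEq R 2, hat X z = R) ∧
        (∀ z ∈ proj56 X, (relComp (check X z) R \ check X z).Nonempty →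
          ∃ z' ∈ proj56 X, hat X z' = check X z) ∧
        (∀ z ∈ proj56 X, hat X z ≠ R →
          ∃ z' ∈ proj56 X, check X z' = hat X z)) := by
  constructor
  · rintro rfl
    have getI : ∀ z ∈ proj56 (run R m), ∃ i, 1 ≤ i ∧ i ≤ m ∧ z ∈ relEq R (i+1) := by
      intro z hz
      by_contra h
      push_neg at h
      exact hz (Aux.tilde_run_empty R (fun i hh1 hh2 => h i hh1 hh2))
    have fiber : ∀ i, 1 ≤ i → i ≤ m → ∀ z ∈ relEq R (i+1),
        tilde (run R m) z = relLe R i ×ˢ relLe R (i+1) ∧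
        hat (run R m) z = relLe R i ∧ check (run R m) z = relLe R (i+1) ∧
        z ∈ proj56 (run R m) := by
      intro i h1 h2 z hz
      have hRne : R.Nonempty := Aux.R_nonempty_of_relEq R (by omega) ⟨z, hz⟩
      have ht := Aux.tilde_run_eq R h1 h2 hz
      have hA : (relLe R i).Nonempty := Aux.relLe_nonempty R h1 hRne
      have hB : (relLe R (i+1)).Nonempty := Aux.relLe_nonempty R (by omega) hRne
      refine ⟨ht, Aux.hat_of_prod ht hB, Aux.check_of_prod ht hA, ?_⟩
      intro hemp
      rw [ht] at hemp
      exact (hA.prod hB).ne_empty hemp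
    refine ⟨?_, ⟨?_, ?_⟩, ?_, ?_⟩
    · intro z hz
      obtain ⟨i, h1, h2, hz'⟩ := getI z hz
      obtain ⟨ht, hh, hc, _⟩ := fiber i h1 h2 z hz'
      refine ⟨by rw [ht, hh, hc], ?_, ?_, ?_, ?_⟩
      · rw [hh]
        intro w hw
        exact Aux.relPow_subset_relLe R le_rfl h1 (show w ∈ relPow R 1 from hw)
      · rw [hc, hh]
        exact Aux.relLe_succ_eq R h1
      · rw [Set.mem_diff, hc, hh]
        have := (Aux.relEq_succ R i) ▸ hz'
        exact this
      · intro z' hz''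
        rw [Set.mem_diff, hc, hh] at hz''
        have hz''' : z' ∈ relEq R (i+1) := by rw [Aux.relEq_succ R i]; exact hz''
        obtain ⟨_, hh', _, hp'⟩ := fiber i h1 h2 z' hz'''
        exact ⟨hp', by rw [hh', hh]⟩
    · intro z hz
      have hRne : R.Nonempty := Aux.R_nonempty_of_relEq R (by omega) ⟨z, hz⟩
      have hm1 : 1 ≤ m := by
        have : 0 < R.ncard := (Set.ncard_pos (Set.toFinite R)).2 hRne
        omega
      exact (fiber 1 le_rfl hm1 z hz).2.2.2
    · intro z hz
      have hRne : R.Nonempty := Aux.R_nonempty_of_relEq R (by omega) ⟨z, hz⟩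
      have hm1 : 1 ≤ m := by
        have : 0 < R.ncard := (Set.ncard_pos (Set.toFinite R)).2 hRne
        omega
      obtain ⟨_, hh, _, _⟩ := fiber 1 le_rfl hm1 z hz
      rw [hh, Aux.relLe_one]
    · intro z hz hne
      obtain ⟨i, h1, h2, hz'⟩ := getI z hz
      obtain ⟨ht, hh, hc, _⟩ := fiber i h1 h2 z hz'
      obtain ⟨w, hw⟩ := hne
      rw [Set.mem_diff, hc] at hw
      have hw2 : w ∈ relEq R (i+1+1) := by
        rw [Aux.relEq_succ R (i+1)]
        exact ⟨Aux.relComp_relLe_subset R (i+1) hw.1, hw.2⟩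
      have hi2m : i + 2 ≤ m := by
        have := Aux.relEq_le_ncard R hw2
        omega
      obtain ⟨_, hh', _, hp'⟩ := fiber (i+1) (by omega) (by omega) w hw2
      exact ⟨w, hp', by rw [hh', hc]⟩
    · intro z hz hne
      obtain ⟨i, h1, h2, hz'⟩ := getI z hz
      obtain ⟨ht, hh, hc, _⟩ := fiber i h1 h2 z hz'
      have hi2 : 2 ≤ i := by
        rcases Nat.lt_or_ge i 2 with h | h
        · exfalso
          obtain rfl : i = 1 := by omega
          exact hne (by rw [hh, Aux.relLe_one])
        · exact h
      obtain ⟨k, rfl⟩ : ∃ k, i = k + 1 := ⟨i - 1, by omega⟩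
      have hkne : (relEq R (k+1)).Nonempty :=
        Aux.relEq_nonempty_of_le R ⟨z, hz'⟩ (by omega) (by omega)
      obtain ⟨w, hw⟩ := hkne
      obtain ⟨_, _, hc', hp'⟩ := fiber k (by omega) (by omega) w hw
      exact ⟨w, hp', by rw [hc', hh]⟩
  · rintro ⟨h1, ⟨h2a, h2b⟩, h3, h4⟩
    have claim : ∀ c : ℕ, ∀ z ∈ proj56 X, (hat X z).ncard ≤ c →
        ∃ i, 1 ≤ i ∧ i ≤ m ∧ z ∈ relEq R (i+1) ∧ hat X z = relLe R i := by
      intro c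
      induction c with
      | zero =>
        intro z hz hcard
        exfalso
        obtain ⟨ha, hb, hc, hd, he⟩ := h1 z hz
        have hemp : hat X z = ∅ := by
          have hfin : (hat X z).Finite := Set.toFinite _
          rw [Nat.le_zero] at hcard
          exact (Set.ncard_eq_zero hfin).1 hcard
        rw [Set.mem_diff, hc, hemp] at hd
        simp [relComp] at hd
      | succ c ih =>
        intro z hz hcard
        obtain ⟨ha, hb, hc, hd, he⟩ := h1 z hz
        by_cases hR : hat X z = R
        · have hcz : check X z = relLe R 2 := by
            rw [hc, hR, Aux.relLe_succ_eq R le_rfl, Aux.relLe_one]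
          have hz2 : z ∈ relEq R 2 := by
            rw [Aux.relEq_succ R 1, Set.mem_diff, Aux.relLe_one]
            rw [Set.mem_diff, hcz, hR] at hd
            exact hd
          have hm2 : 2 ≤ m := by
            have := Aux.relEq_le_ncard R hz2
            omega
          exact ⟨1, le_rfl, by omega, hz2, by rw [hR, Aux.relLe_one]⟩
        · obtain ⟨z', hz', hcz'⟩ := h4 z hz hR
          obtain ⟨ha', hb', hc', hd', he'⟩ := h1 z' hz'
          have hsub : hat X z' ⊆ hat X z := by
            rw [← hcz', hc']
            exact Set.subset_union_left
          have hne2 : hat X z' ≠ hat X z := by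
            intro h
            rw [← hcz'] at h
            rw [Set.mem_diff] at hd'
            exact hd'.2 (h ▸ hd'.1)
          have hlt : (hat X z').ncard < (hat X z).ncard :=
            Set.ncard_lt_ncard (ssubset_of_subset_of_ne hsub hne2) (Set.toFinite _)
          obtain ⟨i, hi1, hi2, hzi, hhi⟩ := ih z' hz' (by omega)
          have hhz : hat X z = relLe R (i+1) := by
            rw [← hcz', hc', hhi, ← Aux.relLe_succ_eq R hi1]
          have hcz : check X z = relLe R (i+2) := by
            rw [hc, hhz, ← Aux.relLe_succ_eq R (by omega)]
          have hz2 : z ∈ relEq R (i+2) := by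
            rw [Aux.relEq_succ R (i+1), Set.mem_diff]
            rw [Set.mem_diff, hcz, hhz] at hd
            exact hd
          have hm2 : i + 2 ≤ m := by
            have := Aux.relEq_le_ncard R hz2
            omega
          exact ⟨i+1, by omega, by omega, hz2, hhz⟩
    have cover : ∀ i, 1 ≤ i → i ≤ m → ∀ z ∈ relEq R (i+1), z ∈ proj56 X := by
      intro i
      induction i with
      | zero => omega
      | succ k ihk =>
        intro _ hkm z hz
        rcases Nat.eq_zero_or_pos k with rfl | hk
        · exact h2a hz
        · have hub : (relEq R (k+1)).Nonempty :=
            Aux.relEq_nonempty_of_le R ⟨z, hz⟩ (by omega) (by omega)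
          obtain ⟨w, hw⟩ := hub
          have hwp : w ∈ proj56 X := ihk (by omega) (by omega) w hw
          obtain ⟨j, hj1, hj2, hwj, hhw⟩ := claim (hat X w).ncard w hwp le_rfl
          rw [show j = k from by have := Aux.relEq_unique R hwj hw; omega] at hhw
          obtain ⟨haw, hbw, hcw, hdw, hew⟩ := h1 w hwp
          have hcw2 : check X w = relLe R (k+1) := by
            rw [hcw, hhw, ← Aux.relLe_succ_eq R hk]
          have hz1 : z ∈ relComp (relLe R (k+1)) R := by
            have heq : relPow R (k+2) = relComp (relPow R (k+1)) R :=
              Aux.relPow_succ R (k+1) (by omega)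
            have hz1' : z ∈ relPow R (k+2) := hz.1
            rw [heq] at hz1'
            exact Aux.relComp_mono (Aux.relPow_subset_relLe R (by omega) le_rfl) hz1'
          have hnon : (relComp (check X w) R \ check X w).Nonempty :=
            ⟨z, by rw [Set.mem_diff, hcw2]; exact ⟨hz1, hz.2⟩⟩
          obtain ⟨z', hz'p, hhz'⟩ := h3 w hwp hnon
          obtain ⟨haz', hbz', hcz', hdz', hez'⟩ := h1 z' hz'p
          have hcc : check X z' = relLe R (k+2) := by
            rw [hcz', hhz', hcw2, ← Aux.relLe_succ_eq R (by omega)]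
          have hzin : z ∈ check X z' \ hat X z' := by
            rw [Set.mem_diff, hcc, hhz', hcw2]
            exact ⟨Aux.relPow_subset_relLe R (by omega) le_rfl hz.1, hz.2⟩
          exact (hez' z hzin).1
    ext ⟨p, q, z⟩
    constructor
    · intro hx
      have hpt : (p, q) ∈ tilde X z := hx
      have hzp : z ∈ proj56 X := by
        simp only [proj56, Set.mem_setOf_eq, ← Set.nonempty_iff_ne_empty]
        exact ⟨(p, q), hpt⟩
      obtain ⟨i, hi1, hi2, hzi, hhz⟩ := claim (hat X z).ncard z hzp le_rfl
      obtain ⟨ha, hb, hc, hd, he⟩ := h1 z hzp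
      have hcz : check X z = relLe R (i+1) := by
        rw [hc, hhz, ← Aux.relLe_succ_eq R hi1]
      rw [ha] at hpt
      rw [Set.mem_prod] at hpt
      rw [hhz] at hpt
      rw [hcz] at hpt
      exact (Aux.mem_run R).2 ⟨i, ⟨hi1, hi2⟩, hpt.1, hpt.2, hzi⟩
    · intro hr
      obtain ⟨i, ⟨hi1, hi2⟩, hp, hq, hzi⟩ := (Aux.mem_run R).1 hr
      have hzp : z ∈ proj56 X := cover i hi1 hi2 z hzi
      obtain ⟨j, hj1, hj2, hzj, hhz⟩ := claim (hat X z).ncard z hzp le_rfl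
      rw [show j = i from by have := Aux.relEq_unique R hzj hzi; omega] at hhz
      obtain ⟨ha, hb, hc, hd, he⟩ := h1 z hzp
      have hcz : check X z = relLe R (i+1) := by
        rw [hc, hhz, ← Aux.relLe_succ_eq R hi1]
      have hmem : (p, q) ∈ tilde X z := by
        rw [ha]
        exact Set.mem_prod.2 ⟨by rw [hhz]; exact hp, by rw [hcz]; exact hq⟩
      exact hmem
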